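/- For integers d ≥ 1, 0 ≤ ℓ ≤ d, and 0 ≤ i, with B any real number, the difference g_i(B, ℓ) - g_{i+1}(B, ℓ) equals d · Σ over (d-ℓ-1)-subsets J of {1,...,d-1} of Π_{k ∈ J} (B + d - i - k), where g_i(n, ℓ) = Σ_{I ⊆ {0,...,d-1}, |I|=d-ℓ} Π_{k ∈ I}(n + d - i - k). -/

import Mathlib

open Finset

/-- Splitting a sum over `powersetCard (n+1) (insert x s)`. -/
lemma sum_powersetCard_insert {x : ℕ} {s : Finset ℕ} (hx : x ∉ s) (n : ℕ)
    (f : Finset ℕ → ℝ) :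
    ∑ I ∈ (insert x s).powersetCard (n + 1), f I =
      (∑ I ∈ s.powersetCard (n + 1), f I) +
        ∑ J ∈ s.powersetCard n, f (insert x J) := by
  rw [powersetCard_succ_insert hx, sum_union, sum_image]
  · intro a ha b hb hab
    have hax : x ∉ a := fun h => hx ((mem_powersetCard.mp ha).1 h)
    have hbx : x ∉ b := fun h => hx ((mem_powersetCard.mp hb).1 h)
    rwa [insert_erase_invOn.2.injOn.eq_iff] at hab <;> simp [hax, hbx]
  · rw [disjoint_left]
    rintro a ha hb
    obtain ⟨J, hJ, rfl⟩ := mem_image.mp hb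
    exact hx ((mem_powersetCard.mp ha).1 (mem_insert_self _ _))

/-- `g d i ℓ n = Σ_{I ⊆ {0,…,d-1}, |I| = d-ℓ} Π_{k ∈ I} (n + d - i - k)`. -/
noncomputable def g (d i ℓ : ℕ) (n : ℝ) : ℝ :=
  ∑ I ∈ (Finset.range d).powersetCard (d - ℓ), ∏ k ∈ I, (n + d - i - k)

theorem stmt_19 (d : ℕ) (hd : 1 ≤ d) (ℓ : ℕ) (hℓ : ℓ ≤ d - 1) (i : ℕ) (B : ℝ) :
    g d i ℓ B - g d (i + 1) ℓ B =
      (d : ℝ) * ∑ J ∈ (Finset.Icc 1 (d - 1)).powersetCard (d - ℓ - 1),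
        ∏ k ∈ J, (B + d - i - k) := by
  set m := d - ℓ - 1 with hm
  have hdl : d - ℓ = m + 1 := by omega
  -- Step 1: reindex g d (i+1) ℓ B as a sum over subsets of Icc 1 d
  have hIcc : Finset.Icc 1 d = (Finset.range d).map ⟨fun k => k + 1, fun a b h => by simpa using h⟩ := by
    ext k
    simp only [mem_Icc, Finset.mem_map, Finset.mem_range, Function.Embedding.coeFn_mk]
    constructor
    · rintro ⟨h1, h2⟩; exact ⟨k - 1, by omega, by show k - 1 + 1 = k; omega⟩
    · rintro ⟨a, ha, rfl⟩; show 1 ≤ a + 1 ∧ a + 1 ≤ d; omega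
  have h1 : g d (i + 1) ℓ B =
      ∑ I ∈ (Finset.Icc 1 d).powersetCard (d - ℓ), ∏ k ∈ I, (B + d - i - k) := by
    rw [hIcc, powersetCard_map, sum_map, g]
    refine Finset.sum_congr rfl fun I _ => ?_
    rw [RelEmbedding.coe_toEmbedding, mapEmbedding_apply, prod_map]
    refine Finset.prod_congr rfl fun k _ => ?_
    show _ = B + (d:ℝ) - (i:ℝ) - ((k + 1 : ℕ) : ℝ)
    push_cast; ring
  -- Step 2: split both sums at the special element
  have h0 : (0 : ℕ) ∉ Finset.Icc 1 (d - 1) := by simp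
  have hdmem : d ∉ Finset.Icc 1 (d - 1) := by simp; omega
  have hr : Finset.range d = insert 0 (Finset.Icc 1 (d - 1)) := by
    ext k; simp; omega
  have hi2 : Finset.Icc 1 d = insert d (Finset.Icc 1 (d - 1)) := by
    ext k; simp; omega
  have hgL : g d i ℓ B =
      (∑ I ∈ (Finset.Icc 1 (d-1)).powersetCard (m + 1), ∏ k ∈ I, (B + d - i - k)) +
        ∑ J ∈ (Finset.Icc 1 (d-1)).powersetCard m, ∏ k ∈ insert 0 J, (B + d - i - k) := by
    rw [g, hdl, hr, sum_powersetCard_insert h0]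
  have hgR : g d (i + 1) ℓ B =
      (∑ I ∈ (Finset.Icc 1 (d-1)).powersetCard (m + 1), ∏ k ∈ I, (B + d - i - k)) +
        ∑ J ∈ (Finset.Icc 1 (d-1)).powersetCard m, ∏ k ∈ insert d J, (B + d - i - k) := by
    rw [h1, hdl, hi2, sum_powersetCard_insert hdmem]
  rw [hgL, hgR]
  rw [Finset.mul_sum]
  have : ∀ J ∈ (Finset.Icc 1 (d-1)).powersetCard m,
      (∏ k ∈ insert 0 J, (B + d - i - k)) - (∏ k ∈ insert d J, (B + d - i - k)) =
        (d : ℝ) * ∏ k ∈ J, (B + d - i - k) := by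
    intro J hJ
    have hJ0 : (0:ℕ) ∉ J := fun h => h0 ((mem_powersetCard.mp hJ).1 h)
    have hJd : d ∉ J := fun h => hdmem ((mem_powersetCard.mp hJ).1 h)
    rw [prod_insert hJ0, prod_insert hJd]
    push_cast; ring
  rw [← Finset.sum_congr rfl this, Finset.sum_sub_distrib]
  ring
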